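/- Let Z₁ and Z₂ be finite field extensions of a field K with gcd([Z₁ : K], [Z₂ : K]) = 1. Then Z₁ ⊗_K Z₂ is a field, and [Z₁ ⊗_K Z₂ : K] = [Z₁ : K] · [Z₂ : K]. -/

import Mathlib

open scoped TensorProduct

/-- If a field `Z`, finite-dimensional over `K`, embeds `K`-algebraically into a
finite-dimensional `K`-algebra field `L`, then `[Z : K]` divides `[L : K]`. -/
theorem finrank_dvd_of_algHom_aux (K Z L : Type*) [Field K] [Field Z] [Field L]
    [Algebra K Z] [Algebra K L] (f : Z →ₐ[K] L) :
    Module.finrank K Z ∣ Module.finrank K L := by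
  letI : Algebra Z L := f.toRingHom.toAlgebra
  haveI : IsScalarTower K Z L := IsScalarTower.of_algebraMap_eq fun x => (f.commutes x).symm
  exact ⟨Module.finrank Z L, (Module.finrank_mul_finrank K Z L).symm⟩

set_option maxHeartbeats 1000000 in
set_option synthInstance.maxHeartbeats 200000 in
/-- If `Z₁`, `Z₂` are finite field extensions of `K` of coprime degrees, then
`Z₁ ⊗[K] Z₂` is a field of degree `[Z₁ : K] * [Z₂ : K]` over `K`. -/
theorem tensor_product_of_coprime_degree_isField
    (K Z₁ Z₂ : Type*) [Field K] [Field Z₁] [Field Z₂] [Algebra K Z₁] [Algebra K Z₂]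
    [FiniteDimensional K Z₁] [FiniteDimensional K Z₂]
    (h : Nat.Coprime (Module.finrank K Z₁) (Module.finrank K Z₂)) :
    IsField (Z₁ ⊗[K] Z₂) ∧
      Module.finrank K (Z₁ ⊗[K] Z₂) = Module.finrank K Z₁ * Module.finrank K Z₂ := by
  set n₁ := Module.finrank K Z₁ with hn₁
  set n₂ := Module.finrank K Z₂ with hn₂
  have hrank : Module.finrank K (Z₁ ⊗[K] Z₂) = n₁ * n₂ := Module.finrank_tensorProduct
  refine ⟨?_, hrank⟩
  have hpos : 0 < n₁ * n₂ := Nat.mul_pos Module.finrank_pos Module.finrank_pos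
  have : Nontrivial (Z₁ ⊗[K] Z₂) := by
    apply Module.nontrivial_of_finrank_pos (R := K)
    rw [hrank]; exact hpos
  obtain ⟨m, hm⟩ := Ideal.exists_maximal (Z₁ ⊗[K] Z₂)
  set L := (Z₁ ⊗[K] Z₂) ⧸ m with hL
  letI : Field L := (Ideal.Quotient.maximal_ideal_iff_isField_quotient m).mp hm |>.toField
  haveI : FiniteDimensional K L := Module.Finite.of_surjective
    (Ideal.Quotient.mkₐ K m).toLinearMap (Ideal.Quotient.mkₐ_surjective K m)
  have hd₁ : n₁ ∣ Module.finrank K L :=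
    finrank_dvd_of_algHom_aux K Z₁ L
      ((Ideal.Quotient.mkₐ K m).comp Algebra.TensorProduct.includeLeft)
  have hd₂ : n₂ ∣ Module.finrank K L :=
    finrank_dvd_of_algHom_aux K Z₂ L
      ((Ideal.Quotient.mkₐ K m).comp Algebra.TensorProduct.includeRight)
  have hdvd : n₁ * n₂ ∣ Module.finrank K L := Nat.Coprime.mul_dvd_of_dvd_of_dvd h hd₁ hd₂
  have hsurj : Function.Surjective (Ideal.Quotient.mkₐ K m).toLinearMap :=
    Ideal.Quotient.mkₐ_surjective K m
  have hle : Module.finrank K L ≤ n₁ * n₂ := by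
    rw [← hrank]
    calc Module.finrank K L
        = Module.finrank K (LinearMap.range (Ideal.Quotient.mkₐ K m).toLinearMap) := by
          rw [LinearMap.range_eq_top.mpr hsurj, finrank_top]
      _ ≤ Module.finrank K (Z₁ ⊗[K] Z₂) := (Ideal.Quotient.mkₐ K m).toLinearMap.finrank_range_le
  haveI : NoZeroSMulDivisors K L :=
    by have := NoZeroSMulDivisors.iff_algebraMap_injective.mpr (algebraMap K L).injective; infer_instance
  have hLpos : 0 < Module.finrank K L := Module.finrank_pos
  have heq : Module.finrank K L = n₁ * n₂ :=
    le_antisymm hle (Nat.le_of_dvd hLpos hdvd)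
  have hinj : Function.Injective (Ideal.Quotient.mkₐ K m).toLinearMap :=
    (LinearMap.injective_iff_surjective_of_finrank_eq_finrank
      (by rw [hrank, heq])).mpr hsurj
  have hbij : Function.Bijective (Ideal.Quotient.mk m) := ⟨hinj, Ideal.Quotient.mk_surjective⟩
  exact (RingEquiv.ofBijective (Ideal.Quotient.mk m) hbij).toMulEquiv.isField
    (Field.toIsField L)
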